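/- Pfaffian formula for $\beta = 4$: Let $N \geq 1$, $\nu$ a finite Borel measure on $\mathbb R$ with all moments finite, and $(p_n)_{n=1}^{2N}$ monic polynomials with $\deg p_n = n-1$. Define the antisymmetric matrix $\mathbf W = \left[\int_{\mathbb R}\big(p_m(x)p_n'(x) - p_m'(x)p_n(x)\big)\, d\nu(x)\right]_{m,n=1}^{2N}$. Then $\frac{1}{N!}\int_{\mathbb R^N}\prod_{m<n}(\lambda_n - \lambda_m)^4\, d\nu^N(\boldsymbol\lambda) = \mathrm{Pf}\,\mathbf W$. -/

import Mathlib

open MeasureTheory Finset Polynomial Equiv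


def fe (N : ℕ) (i : Fin N) (b : Fin 2) : Fin (2*N) := ⟨2*i+b, by omega⟩
def ci {N : ℕ} (c : Fin (2*N)) : Fin N := ⟨c/2, by omega⟩

def ee (N : ℕ) : Fin N × Fin 2 ≃ Fin (2*N) where
  toFun q := fe N q.1 q.2
  invFun c := (⟨c/2, by omega⟩, ⟨c%2, by omega⟩)
  left_inv q := by
    obtain ⟨⟨i,hi⟩,⟨b,hb⟩⟩ := q
    simp only [fe, Prod.mk.injEq, Fin.mk.injEq]
    constructor <;> omega
  right_inv c := by
    obtain ⟨c, hc⟩ := c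
    simp only [fe, Fin.mk.injEq]
    omega

lemma prod_fe {M : Type*} [CommMonoid M] {N : ℕ} (F : Fin (2*N) → M) :
    ∏ c, F c = ∏ i : Fin N, (F (fe N i 0) * F (fe N i 1)) := by
  rw [← (ee N).prod_comp F, Fintype.prod_prod_type]
  exact Finset.prod_congr rfl fun i _ => by rw [Fin.prod_univ_two]; rfl

lemma integral_pi_prod {ι : Type} [Fintype ι] {X : Type} [MeasurableSpace X] (ν : Measure X)
    [SigmaFinite ν] (f : ι → X → ℝ) :
    ∫ x : ι → X, ∏ i, f i (x i) ∂(Measure.pi fun _ => ν) = ∏ i, ∫ x, f i x ∂ν := by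
  letI : MeasureSpace X := ⟨ν⟩
  exact integral_fintype_prod_eq_prod f

lemma integrable_pi_prod {ι : Type} [Fintype ι] {X : Type} [MeasurableSpace X] (ν : Measure X)
    [SigmaFinite ν] (f : ι → X → ℝ) (hf : ∀ i, Integrable (f i) ν) :
    Integrable (fun x : ι → X => ∏ i, f i (x i)) (Measure.pi fun _ => ν) := by
  letI : MeasureSpace X := ⟨ν⟩
  exact Integrable.fintype_prod hf
lemma fe_lt_fe {N : ℕ} {i j : Fin N} {b b' : Fin 2} :
    fe N i b < fe N j b' ↔ (i < j ∨ (i = j ∧ b < b')) := by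
  obtain ⟨i,hi⟩ := i; obtain ⟨j,hj⟩ := j; obtain ⟨b,hb⟩ := b; obtain ⟨b',hb'⟩ := b'
  simp only [fe, Fin.lt_def, Fin.mk.injEq, Fin.mk_lt_mk]
  omega

lemma prod_univ_eq_self_mul_Ioi {M : Type*} [CommMonoid M] {N : ℕ} (i : Fin N)
    (h : Fin N → M) (h1 : ∀ j, j < i → h j = 1) :
    ∏ j, h j = h i * ∏ j ∈ Ioi i, h j := by
  rw [← Finset.prod_subset (Finset.subset_univ (Ici i))
    (fun j _ hj => h1 j (by simpa using hj)),
    ← Finset.Ioi_insert, Finset.prod_insert (by simp)]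

lemma prod_pairs {M : Type*} [CommMonoid M] {N : ℕ} (f : Fin (2*N) → Fin (2*N) → M) :
    (∏ c, ∏ c' ∈ Ioi c, f c c')
      = (∏ i : Fin N, f (fe N i 0) (fe N i 1)) *
        ∏ i : Fin N, ∏ j ∈ Ioi i,
          (f (fe N i 0) (fe N j 0) * f (fe N i 0) (fe N j 1) *
           f (fe N i 1) (fe N j 0) * f (fe N i 1) (fe N j 1)) := by
  set G : Fin (2*N) → Fin (2*N) → M := fun c c' => if c < c' then f c c' else 1 with hG
  have h1 : ∀ (c : Fin (2*N)), ∏ c' ∈ Ioi c, f c c' = ∏ c', G c c' := by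
    intro c
    rw [show Ioi c = univ.filter (c < ·) from by ext; simp, Finset.prod_filter]
  set H : Fin N → Fin N → M := fun i j =>
    G (fe N i 0) (fe N j 0) * G (fe N i 0) (fe N j 1) *
    (G (fe N i 1) (fe N j 0) * G (fe N i 1) (fe N j 1)) with hH
  have key : (∏ c, ∏ c' ∈ Ioi c, f c c') = ∏ i, ∏ j, H i j := by
    simp_rw [h1]
    rw [prod_fe (fun c => ∏ c', G c c')]
    refine Finset.prod_congr rfl fun i _ => ?_
    rw [prod_fe (fun c' => G (fe N i 0) c'), prod_fe (fun c' => G (fe N i 1) c'),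
      ← Finset.prod_mul_distrib]
  rw [key]
  have hHdiag : ∀ i, H i i = f (fe N i 0) (fe N i 1) := by
    intro i
    simp only [hH, hG]
    rw [if_neg (by simp [fe_lt_fe]), if_pos (by simp [fe_lt_fe]),
      if_neg (by simp [fe_lt_fe]), if_neg (by simp [fe_lt_fe])]
    simp
  have hHlt : ∀ i j, i < j → H i j =
      f (fe N i 0) (fe N j 0) * f (fe N i 0) (fe N j 1) *
      f (fe N i 1) (fe N j 0) * f (fe N i 1) (fe N j 1) := by
    intro i j hij
    simp only [hH, hG]
    rw [if_pos (fe_lt_fe.2 (Or.inl hij)), if_pos (fe_lt_fe.2 (Or.inl hij)),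
      if_pos (fe_lt_fe.2 (Or.inl hij)), if_pos (fe_lt_fe.2 (Or.inl hij))]
    rw [← mul_assoc]
  have hHgt : ∀ i j, j < i → H i j = 1 := by
    intro i j hij
    have : ∀ b b' : Fin 2, ¬ (fe N i b < fe N j b') := by
      intro b b'
      rw [fe_lt_fe]
      rintro (h | ⟨h, _⟩)
      · exact absurd (h.trans hij) (lt_irrefl _)
      · exact absurd (h ▸ hij) (lt_irrefl _)
    simp only [hH, hG, if_neg (this _ _)]
    simp
  calc ∏ i, ∏ j, H i j = ∏ i, (H i i * ∏ j ∈ Ioi i, H i j) :=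
        Finset.prod_congr rfl fun i _ =>
          prod_univ_eq_self_mul_Ioi i (H i) (fun j hj => hHgt i j hj)
    _ = _ := by
        rw [Finset.prod_mul_distrib]
        congr 1
        · exact Finset.prod_congr rfl fun i _ => hHdiag i
        · exact Finset.prod_congr rfl fun i _ => Finset.prod_congr rfl
            fun j hj => hHlt i j (by simpa using hj)


lemma ci_fe {N : ℕ} (i : Fin N) (b : Fin 2) : ci (fe N i b) = i := by
  obtain ⟨b, hb⟩ := b
  apply Fin.ext
  simp only [ci, fe, Fin.val_mk]
  omega

lemma fe0_mod {N : ℕ} (i : Fin N) : ((fe N i 0 : Fin (2*N)) : ℕ) % 2 = 0 := by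
  simp [fe]
lemma fe1_mod {N : ℕ} (i : Fin N) : ((fe N i 1 : Fin (2*N)) : ℕ) % 2 = 1 := by
  simp only [fe, Fin.val_mk]; omega

/-- `q m x t = ((x+t)^m - x^m)/t` as a polynomial expression. -/
noncomputable def qq (m : ℕ) (x t : ℝ) : ℝ :=
  ∑ k ∈ range m, (m.choose k : ℝ) * x^k * t^(m-1-k)

lemma t_mul_qq (m : ℕ) (x t : ℝ) : t * qq m x t = (x+t)^m - x^m := by
  rw [add_pow, qq, Finset.mul_sum, Finset.sum_range_succ]
  simp only [Nat.choose_self, Nat.cast_one, mul_one, Nat.sub_self, pow_zero]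
  rw [add_sub_cancel_right]
  refine Finset.sum_congr rfl fun k hk => ?_
  rw [show m - k = (m-1-k)+1 from by simp at hk; omega, pow_succ]
  ring

lemma qq_zero (m : ℕ) (x : ℝ) : qq m x 0 = m * x^(m-1) := by
  rcases Nat.eq_zero_or_pos m with h | h
  · subst h; simp [qq]
  · rw [qq, Finset.sum_eq_single (m-1)]
    · rw [Nat.sub_self, pow_zero, Nat.choose_symm (by omega), Nat.choose_one_right]
      ring
    · intro k hk hne
      rw [zero_pow (by simp at hk ⊢; omega)]
      ring
    · intro h'; simp at h'; omega

lemma qq_cont (m : ℕ) (x : ℝ) : Continuous (fun t => qq m x t) := by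
  unfold qq
  exact continuous_finset_sum _ fun k _ => by fun_prop

noncomputable def Vm (N : ℕ) (x : Fin N → ℝ) : Matrix (Fin (2*N)) (Fin (2*N)) ℝ :=
  Matrix.of fun m c => if (c : ℕ) % 2 = 0 then x (ci c) ^ (m:ℕ)
    else (m:ℕ) * x (ci c) ^ ((m:ℕ)-1)

noncomputable def Dm (N : ℕ) (x : Fin N → ℝ) (t : ℝ) : Matrix (Fin (2*N)) (Fin (2*N)) ℝ :=
  Matrix.of fun m c => if (c : ℕ) % 2 = 0 then x (ci c) ^ (m:ℕ) else qq (m:ℕ) (x (ci c)) t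

lemma Dm_zero (N : ℕ) (x : Fin N → ℝ) : Dm N x 0 = Vm N x := by
  ext m c
  simp only [Dm, Vm, Matrix.of_apply]
  split <;> simp [qq_zero]

noncomputable def yy (N : ℕ) (x : Fin N → ℝ) (t : ℝ) (c : Fin (2*N)) : ℝ :=
  x (ci c) + ((((c:ℕ)%2 : ℕ)) : ℝ) * t

lemma yy_fe0 {N : ℕ} (x : Fin N → ℝ) (t : ℝ) (i : Fin N) : yy N x t (fe N i 0) = x i := by
  simp [yy, ci_fe, fe0_mod]
lemma yy_fe1 {N : ℕ} (x : Fin N → ℝ) (t : ℝ) (i : Fin N) : yy N x t (fe N i 1) = x i + t := by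
  simp [yy, ci_fe, fe1_mod]


noncomputable def Cm (N : ℕ) (x : Fin N → ℝ) (t : ℝ) : Matrix (Fin (2*N)) (Fin (2*N)) ℝ :=
  Matrix.of fun m c => if (c : ℕ) % 2 = 0 then x (ci c) ^ (m:ℕ)
    else (x (ci c) + t) ^ (m:ℕ) - x (ci c) ^ (m:ℕ)

noncomputable def E2 (N : ℕ) : Matrix (Fin (2*N)) (Fin (2*N)) ℝ :=
  Matrix.of fun c c' => if c = c' then 1
    else if (c':ℕ) = (c:ℕ)+1 ∧ (c:ℕ) % 2 = 0 then 1 else 0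

lemma det_E2 (N : ℕ) : (E2 N).det = 1 := by
  rw [Matrix.det_of_upperTriangular (M := E2 N) ?ht]
  · simp [E2, Matrix.diag]
  · intro c c' h
    simp only [id] at h
    have h1 : ¬ (c = c') := by rintro rfl; exact lt_irrefl _ h
    have h2 : ¬ ((c':ℕ) = (c:ℕ)+1 ∧ (c:ℕ) % 2 = 0) := by
      rintro ⟨h2, -⟩
      have := Fin.lt_def.mp h
      omega
    simp [E2, h1, h2]

lemma Cm_mul_E2 (N : ℕ) (x : Fin N → ℝ) (t : ℝ) :
    Cm N x t * E2 N = Matrix.of (fun m c : Fin (2*N) => yy N x t c ^ (m:ℕ)) := by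
  ext m c'
  rw [Matrix.mul_apply]
  rcases Nat.even_or_odd (c' : ℕ) with he | ho
  · have he' : (c' : ℕ) % 2 = 0 := Nat.even_iff.mp he
    rw [Finset.sum_eq_single c']
    · simp only [E2, Cm, Matrix.of_apply, if_pos rfl, mul_one, if_pos he', yy, he']
      norm_num
    · intro c _ hc
      have h2 : ¬ ((c':ℕ) = (c:ℕ)+1 ∧ (c:ℕ) % 2 = 0) := by
        rintro ⟨h2, h3⟩; omega
      simp [E2, hc, h2]
    · simp
  · have ho' : (c' : ℕ) % 2 = 1 := Nat.odd_iff.mp ho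
    have hpos : 0 < (c' : ℕ) := by omega
    have hpcb : (c':ℕ) - 1 < 2*N := by omega
    let pc : Fin (2*N) := ⟨(c':ℕ) - 1, hpcb⟩
    have hpcv : (pc : ℕ) = (c':ℕ) - 1 := rfl
    have hsum : ∀ c : Fin (2*N), Cm N x t m c * E2 N c c'
        = (if c = c' then Cm N x t m c else 0) + (if c = pc then Cm N x t m c else 0) := by
      intro c
      rcases eq_or_ne c c' with rfl | h1
      · have hnp : ¬ (c = pc) := by
          intro h; rw [Fin.ext_iff, hpcv] at h; omega
        rw [if_pos rfl, if_neg hnp, add_zero]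
        simp only [E2, Matrix.of_apply, if_pos rfl, mul_one]
        simp
      · rcases eq_or_ne c pc with h2 | h2
        · have hcv : (c:ℕ) = (c':ℕ) - 1 := by rw [h2]
          have hcond : ((c':ℕ) = (c:ℕ)+1 ∧ (c:ℕ) % 2 = 0) := by
            constructor <;> omega
          rw [if_neg h1, if_pos h2, zero_add]
          simp only [E2, Matrix.of_apply, if_neg h1, if_pos hcond, mul_one]
        · have hcond : ¬ ((c':ℕ) = (c:ℕ)+1 ∧ (c:ℕ) % 2 = 0) := by
            rintro ⟨ha, hb⟩
            exact h2 (Fin.ext (by rw [hpcv]; omega))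
          rw [if_neg h1, if_neg h2, add_zero]
          simp only [E2, Matrix.of_apply, if_neg h1, if_neg hcond, mul_zero]
    rw [Finset.sum_congr rfl (fun c _ => hsum c), Finset.sum_add_distrib,
      Finset.sum_ite_eq' Finset.univ c', Finset.sum_ite_eq' Finset.univ pc]
    have hci : ci pc = ci c' := by
      apply Fin.ext; simp only [ci, Fin.val_mk, hpcv]; omega
    have hpc_even : (pc : ℕ) % 2 = 0 := by rw [hpcv]; omega
    simp only [Finset.mem_univ, if_true, Cm, Matrix.of_apply, if_neg (by omega : ¬ (c':ℕ)%2 = 0),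
      if_pos hpc_even, hci, yy, ho']
    norm_num

lemma Cm_eq (N : ℕ) (x : Fin N → ℝ) (t : ℝ) :
    Cm N x t = Dm N x t * Matrix.diagonal (fun c : Fin (2*N) => if (c:ℕ) % 2 = 0 then 1 else t) := by
  ext m c
  rw [Matrix.mul_diagonal]
  simp only [Cm, Dm, Matrix.of_apply]
  rcases Nat.even_or_odd (c : ℕ) with he | ho
  · have := Nat.even_iff.mp he; simp [this]
  · have := Nat.odd_iff.mp ho
    rw [if_neg (by omega), if_neg (by omega), if_neg (by omega)]
    linear_combination (-1 : ℝ) * t_mul_qq (m:ℕ) (x (ci c)) t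

lemma det_diagS (N : ℕ) (t : ℝ) :
    (Matrix.diagonal (fun c : Fin (2*N) => if (c:ℕ) % 2 = 0 then 1 else t)).det = t^N := by
  rw [Matrix.det_diagonal, prod_fe (fun c : Fin (2*N) => if (c:ℕ) % 2 = 0 then (1:ℝ) else t)]
  rw [Finset.prod_congr rfl (fun i _ => by
    rw [if_pos (fe0_mod i), if_neg (by rw [fe1_mod]; omega), one_mul])]
  simp

lemma det_Bm (N : ℕ) (x : Fin N → ℝ) (t : ℝ) :
    (Matrix.of (fun m c : Fin (2*N) => yy N x t c ^ (m:ℕ))).det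
      = t^N * ∏ i : Fin N, ∏ j ∈ Ioi i,
          ((x j - x i) * ((x j + t) - x i) * (x j - (x i + t)) * ((x j + t) - (x i + t))) := by
  have : Matrix.of (fun m c : Fin (2*N) => yy N x t c ^ (m:ℕ))
      = (Matrix.vandermonde (yy N x t)).transpose := by
    ext m c; simp [Matrix.vandermonde]
  rw [this, Matrix.det_transpose, Matrix.det_vandermonde]
  rw [show (∏ i : Fin (2*N), ∏ j ∈ Ioi i, (yy N x t j - yy N x t i))
    = ∏ c : Fin (2*N), ∏ c' ∈ Ioi c, (fun c c' : Fin (2*N) => yy N x t c' - yy N x t c) c c' from rfl,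
    prod_pairs]
  simp only [yy_fe0, yy_fe1]
  congr 1
  · simp
lemma det_Dm_eq (N : ℕ) (x : Fin N → ℝ) (t : ℝ) (ht : t ≠ 0) :
    (Dm N x t).det = ∏ i : Fin N, ∏ j ∈ Ioi i,
      ((x j - x i) * ((x j + t) - x i) * (x j - (x i + t)) * ((x j + t) - (x i + t))) := by
  have h1 := det_Bm N x t
  rw [← Cm_mul_E2, Matrix.det_mul, det_E2, mul_one, Cm_eq, Matrix.det_mul, det_diagS] at h1
  have hpow : (t:ℝ)^N ≠ 0 := pow_ne_zero _ ht
  rw [mul_comm] at h1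
  exact mul_left_cancel₀ hpow h1

lemma det_Vm (N : ℕ) (x : Fin N → ℝ) :
    (Vm N x).det = ∏ i : Fin N, ∏ j ∈ Ioi i, (x j - x i)^4 := by
  set R : ℝ → ℝ := fun t => ∏ i : Fin N, ∏ j ∈ Ioi i,
      ((x j - x i) * ((x j + t) - x i) * (x j - (x i + t)) * ((x j + t) - (x i + t))) with hR
  have contD : Continuous (fun t => (Dm N x t).det) := by
    apply Continuous.matrix_det
    apply continuous_matrix
    intro m c
    simp only [Dm, Matrix.of_apply]
    split
    · exact continuous_const
    · exact qq_cont _ _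
  have contR : Continuous R := by
    apply continuous_finset_prod
    intro i _
    apply continuous_finset_prod
    intro j _
    fun_prop
  have h1 : Filter.Tendsto (fun t => (Dm N x t).det) (nhdsWithin 0 {(0:ℝ)}ᶜ)
      (nhds (Dm N x 0).det) := (contD.tendsto 0).mono_left nhdsWithin_le_nhds
  have h2 : Filter.Tendsto R (nhdsWithin 0 {(0:ℝ)}ᶜ) (nhds (R 0)) :=
    (contR.tendsto 0).mono_left nhdsWithin_le_nhds
  have heq : (fun t => (Dm N x t).det) =ᶠ[nhdsWithin 0 {(0:ℝ)}ᶜ] R := by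
    filter_upwards [self_mem_nhdsWithin] with t ht
    exact det_Dm_eq N x t ht
  have h3 : (Dm N x 0).det = R 0 := tendsto_nhds_unique (h1.congr' heq) h2
  rw [← Dm_zero, h3, hR]
  refine Finset.prod_congr rfl fun i _ => Finset.prod_congr rfl fun j _ => by ring

/-- The matrix of polynomial/derivative evaluations. -/
noncomputable def Mm (N : ℕ) (p : Fin (2*N) → Polynomial ℝ) (x : Fin N → ℝ) :
    Matrix (Fin (2*N)) (Fin (2*N)) ℝ :=
  Matrix.of fun m c => if (c : ℕ) % 2 = 0 then (p m).eval (x (ci c))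
    else (derivative (p m)).eval (x (ci c))

lemma deriv_eval_sum (q : Polynomial ℝ) (n : ℕ) (hn : q.natDegree < n) (z : ℝ) :
    (derivative q).eval z = ∑ k ∈ range n, q.coeff k * ((k:ℝ) * z^(k-1)) := by
  conv_lhs => rw [q.as_sum_range' n hn]
  rw [map_sum, Polynomial.eval_finset_sum]
  refine Finset.sum_congr rfl fun k _ => ?_
  rw [Polynomial.derivative_monomial, Polynomial.eval_monomial]
  push_cast; ring

lemma Mm_eq (N : ℕ) (p : Fin (2*N) → Polynomial ℝ) (hdeg : ∀ i, (p i).natDegree = (i : ℕ))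
    (x : Fin N → ℝ) :
    Mm N p x = (Matrix.of fun m k : Fin (2*N) => (p m).coeff k) * Vm N x := by
  ext m c
  rw [Matrix.mul_apply]
  have hdm : (p m).natDegree < 2*N := by rw [hdeg m]; exact m.isLt
  simp only [Mm, Vm, Matrix.of_apply]
  by_cases h : (c:ℕ) % 2 = 0
  · rw [if_pos h, Polynomial.eval_eq_sum_range' hdm, ← Fin.sum_univ_eq_sum_range]
    exact Finset.sum_congr rfl fun k _ => by rw [if_pos h]
  · rw [if_neg h, deriv_eval_sum (p m) (2*N) hdm, ← Fin.sum_univ_eq_sum_range]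
    exact Finset.sum_congr rfl fun k _ => by rw [if_neg h]

lemma det_Mm (N : ℕ) (p : Fin (2*N) → Polynomial ℝ) (hmonic : ∀ i, (p i).Monic)
    (hdeg : ∀ i, (p i).natDegree = (i : ℕ)) (x : Fin N → ℝ) :
    (Mm N p x).det = ∏ i : Fin N, ∏ j ∈ Ioi i, (x j - x i)^4 := by
  rw [Mm_eq N p hdeg x, Matrix.det_mul, ← det_Vm N x]
  have hT : (Matrix.of fun m k : Fin (2*N) => (p m).coeff k).det = 1 := by
    rw [Matrix.det_of_lowerTriangular _ ?ht]
    · rw [Finset.prod_eq_one]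
      intro m _
      have := hmonic m
      rw [Matrix.of_apply, ← hdeg m]
      exact (hmonic m).coeff_natDegree
    · intro a b h
      simp only [OrderDual.toDual_lt_toDual] at h
      rw [Matrix.of_apply]
      exact Polynomial.coeff_eq_zero_of_natDegree_lt (by rw [hdeg a]; exact h)
  rw [hT, one_mul]

def bflip {N : ℕ} (c : Fin (2*N)) : Fin (2*N) :=
  ⟨if (c:ℕ) % 2 = 0 then (c:ℕ)+1 else (c:ℕ)-1, by split <;> omega⟩

lemma bflip_fe0 {N : ℕ} (i : Fin N) : bflip (fe N i 0) = fe N i 1 := by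
  apply Fin.ext; simp only [bflip]; rw [if_pos (fe0_mod i)]; simp only [fe, Fin.val_mk, Fin.val_zero, Fin.val_one]

lemma bflip_fe1 {N : ℕ} (i : Fin N) : bflip (fe N i 1) = fe N i 0 := by
  apply Fin.ext; simp only [bflip]; rw [if_neg (by rw [fe1_mod]; omega)]; simp only [fe, Fin.val_mk, Fin.val_zero, Fin.val_one]; omega

lemma ci_bflip {N : ℕ} (c : Fin (2*N)) : ci (bflip c) = ci c := by
  apply Fin.ext; simp only [ci, bflip, Fin.val_mk]; split <;> omega

lemma bflip_bflip {N : ℕ} (c : Fin (2*N)) : bflip (bflip c) = c := by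
  apply Fin.ext; simp only [bflip, Fin.val_mk]; split_ifs <;> omega

lemma fe_ci {N : ℕ} (c : Fin (2*N)) (h : (c:ℕ) % 2 = 0) : fe N (ci c) 0 = c := by
  apply Fin.ext; simp only [fe, ci, Fin.val_mk]; omega

lemma fe_ci' {N : ℕ} (c : Fin (2*N)) (h : (c:ℕ) % 2 = 1) : fe N (ci c) 1 = c := by
  apply Fin.ext; simp only [fe, ci, Fin.val_mk]; omega

def piT {N : ℕ} (T : Finset (Fin N)) : Equiv.Perm (Fin (2*N)) :=
  Function.Involutive.toPerm (fun c => if ci c ∈ T then bflip c else c) (by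
    intro c
    simp only []
    by_cases h : ci c ∈ T
    · rw [if_pos h, ci_bflip, if_pos h, bflip_bflip]
    · rw [if_neg h, if_neg h])

lemma piT_apply {N : ℕ} (T : Finset (Fin N)) (c : Fin (2*N)) :
    piT T c = if ci c ∈ T then bflip c else c := rfl

lemma piT_fe {N : ℕ} (T : Finset (Fin N)) (i : Fin N) (b : Fin 2) :
    piT T (fe N i b) = if i ∈ T then bflip (fe N i b) else fe N i b := by
  rw [piT_apply, ci_fe]

lemma piT_empty {N : ℕ} : piT (∅ : Finset (Fin N)) = 1 := by
  apply Equiv.ext; intro c; simp [piT_apply]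

lemma fe_ne {N : ℕ} (i : Fin N) : fe N i 0 ≠ fe N i 1 := by
  intro h; rw [Fin.ext_iff] at h; simp [fe] at h

lemma piT_insert {N : ℕ} (a : Fin N) (T : Finset (Fin N)) (ha : a ∉ T) :
    piT (insert a T) = Equiv.swap (fe N a 0) (fe N a 1) * piT T := by
  apply Equiv.ext; intro c
  rw [Perm.mul_apply, piT_apply, piT_apply]
  rcases eq_or_ne (ci c) a with hc | hc
  · rw [if_pos (by rw [hc]; exact mem_insert_self a T), if_neg (by rw [hc]; exact ha)]
    rcases Nat.even_or_odd (c:ℕ) with he | ho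
    · have h0 : (c:ℕ) % 2 = 0 := Nat.even_iff.mp he
      rw [show c = fe N a 0 from by rw [← hc, fe_ci c h0], Equiv.swap_apply_left, bflip_fe0]
    · have h1 : (c:ℕ) % 2 = 1 := Nat.odd_iff.mp ho
      rw [show c = fe N a 1 from by rw [← hc, fe_ci' c h1], Equiv.swap_apply_right, bflip_fe1]
  · have hmem : ci c ∈ insert a T ↔ ci c ∈ T := by
      simp [Finset.mem_insert, hc]
    by_cases h : ci c ∈ T
    · rw [if_pos (hmem.mpr h), if_pos h]
      refine (Equiv.swap_apply_of_ne_of_ne ?_ ?_).symm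
      · intro h'; apply hc; rw [← ci_bflip c, h', ci_fe]
      · intro h'; apply hc; rw [← ci_bflip c, h', ci_fe]
    · rw [if_neg (fun hh => h (hmem.mp hh)), if_neg h]
      refine (Equiv.swap_apply_of_ne_of_ne ?_ ?_).symm
      · intro h'; apply hc; rw [h', ci_fe]
      · intro h'; apply hc; rw [h', ci_fe]

lemma sign_piT {N : ℕ} (T : Finset (Fin N)) :
    Equiv.Perm.sign (piT T) = (-1)^T.card := by
  induction T using Finset.induction_on with
  | empty => simp [piT_empty]
  | @insert a T ha ih =>
    rw [piT_insert a T ha, Equiv.Perm.sign_mul, Equiv.Perm.sign_swap (fe_ne a), ih,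
      Finset.card_insert_of_notMem ha, pow_succ]
    exact mul_comm _ _

noncomputable def sgn {N : ℕ} (σ : Equiv.Perm (Fin N)) : ℝ := ((Equiv.Perm.sign σ : ℤ) : ℝ)

lemma sgn_mul {N : ℕ} (σ τ : Equiv.Perm (Fin N)) : sgn (σ * τ) = sgn σ * sgn τ := by
  simp [sgn]

lemma sum_W {N : ℕ} (a : Matrix (Fin (2*N)) (Fin (2*N)) ℝ) :
    ∑ σ : Equiv.Perm (Fin (2*N)), sgn σ *
        ∏ i : Fin N, (a (σ (fe N i 0)) (σ (fe N i 1)) - a (σ (fe N i 1)) (σ (fe N i 0)))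
      = 2^N * ∑ σ : Equiv.Perm (Fin (2*N)), sgn σ * ∏ i : Fin N, a (σ (fe N i 0)) (σ (fe N i 1)) := by
  set S := ∑ σ : Equiv.Perm (Fin (2*N)), sgn σ * ∏ i : Fin N, a (σ (fe N i 0)) (σ (fe N i 1)) with hS
  have expand : ∀ σ : Equiv.Perm (Fin (2*N)),
      ∏ i : Fin N, (a (σ (fe N i 0)) (σ (fe N i 1)) - a (σ (fe N i 1)) (σ (fe N i 0)))
        = ∑ T ∈ (Finset.univ : Finset (Fin N)).powerset,
            (∏ i ∈ T, -a (σ (fe N i 1)) (σ (fe N i 0))) *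
            ∏ i ∈ Finset.univ \ T, a (σ (fe N i 0)) (σ (fe N i 1)) := by
    intro σ
    rw [← Finset.prod_add]
    exact Finset.prod_congr rfl fun i _ => by ring
  calc ∑ σ : Equiv.Perm (Fin (2*N)), sgn σ *
        ∏ i : Fin N, (a (σ (fe N i 0)) (σ (fe N i 1)) - a (σ (fe N i 1)) (σ (fe N i 0)))
      = ∑ T ∈ (Finset.univ : Finset (Fin N)).powerset, ∑ σ : Equiv.Perm (Fin (2*N)),
          sgn σ * ((∏ i ∈ T, -a (σ (fe N i 1)) (σ (fe N i 0))) *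
            ∏ i ∈ Finset.univ \ T, a (σ (fe N i 0)) (σ (fe N i 1))) := by
        rw [Finset.sum_comm]
        exact Finset.sum_congr rfl fun σ _ => by rw [expand σ, Finset.mul_sum]
    _ = ∑ T ∈ (Finset.univ : Finset (Fin N)).powerset, S := by
        refine Finset.sum_congr rfl fun T _ => ?_
        rw [hS]
        refine Fintype.sum_equiv (Equiv.mulRight (piT T)) _ _ fun σ => ?_
        simp only [Equiv.coe_mulRight]
        have happ : ∀ (i : Fin N) (b : Fin 2), (σ * piT T) (fe N i b) = σ (piT T (fe N i b)) :=
          fun i b => rfl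
        have hsgn : sgn (σ * piT T) = sgn σ * (-1)^T.card := by
          rw [sgn_mul]
          congr 1
          simp [sgn, sign_piT]
        have hT : ∏ i ∈ T, a ((σ * piT T) (fe N i 0)) ((σ * piT T) (fe N i 1))
            = ∏ i ∈ T, a (σ (fe N i 1)) (σ (fe N i 0)) :=
          Finset.prod_congr rfl fun i hi => by
            rw [happ, happ, piT_fe, piT_fe, if_pos hi, if_pos hi, bflip_fe0, bflip_fe1]
        have hD : ∏ i ∈ Finset.univ \ T, a ((σ * piT T) (fe N i 0)) ((σ * piT T) (fe N i 1))
            = ∏ i ∈ Finset.univ \ T, a (σ (fe N i 0)) (σ (fe N i 1)) :=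
          Finset.prod_congr rfl fun i hi => by
            have hni : i ∉ T := (Finset.mem_sdiff.mp hi).2
            rw [happ, happ, piT_fe, piT_fe, if_neg hni, if_neg hni]
        have h1 : ∏ i ∈ T, -a (σ (fe N i 1)) (σ (fe N i 0))
            = (-1)^T.card * ∏ i ∈ T, a (σ (fe N i 1)) (σ (fe N i 0)) := by
          rw [Finset.prod_congr rfl (fun i _ => (neg_one_mul (a (σ (fe N i 1)) (σ (fe N i 0)))).symm),
            Finset.prod_mul_distrib, Finset.prod_const]
        have hsplit : ∏ i : Fin N, a ((σ * piT T) (fe N i 0)) ((σ * piT T) (fe N i 1))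
            = (∏ i ∈ Finset.univ \ T, a ((σ * piT T) (fe N i 0)) ((σ * piT T) (fe N i 1))) *
              ∏ i ∈ T, a ((σ * piT T) (fe N i 0)) ((σ * piT T) (fe N i 1)) :=
          (Finset.prod_sdiff (Finset.subset_univ T)).symm
        rw [hsgn, hsplit, hT, hD, h1]
        ring
    _ = 2^N * S := by
        rw [Finset.sum_const, Finset.card_powerset, Finset.card_univ, Fintype.card_fin,
          nsmul_eq_mul]
        push_cast
        ring

/-- The Pfaffian of a `2N × 2N` real matrix. -/
noncomputable def pf {N : ℕ} (A : Matrix (Fin (2*N)) (Fin (2*N)) ℝ) : ℝ :=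
  (1 / (2^N * (Nat.factorial N) : ℝ)) *
    ∑ σ : Equiv.Perm (Fin (2*N)), ((Equiv.Perm.sign σ : ℤ) : ℝ) *
      ∏ m : Fin N,
        A (σ ⟨2*(m:ℕ), by have := m.isLt; omega⟩) (σ ⟨2*(m:ℕ)+1, by have := m.isLt; omega⟩)

lemma pf_eq {N : ℕ} (A : Matrix (Fin (2*N)) (Fin (2*N)) ℝ) :
    pf A = (1 / (2^N * (Nat.factorial N) : ℝ)) *
      ∑ σ : Equiv.Perm (Fin (2*N)), sgn σ * ∏ m : Fin N, A (σ (fe N m 0)) (σ (fe N m 1)) := by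
  unfold pf
  congr 1

/-- Pfaffian formula for `β = 4`: with
`W = [∫ (p_m(x) p_n'(x) - p_m'(x) p_n(x)) dν(x)]_{m,n=1}^{2N}`,
`(1/N!) ∫_{ℝ^N} ∏_{m<n} (λ_n - λ_m)^4 dν^N(λ) = Pf W`. -/
theorem stmt11 (N : ℕ) (hN : 1 ≤ N)
    (ν : Measure ℝ) [IsFiniteMeasure ν]
    (hmom : ∀ k : ℕ, Integrable (fun x => x ^ k) ν)
    (p : Fin (2*N) → Polynomial ℝ)
    (hmonic : ∀ i, (p i).Monic) (hdeg : ∀ i, (p i).natDegree = (i : ℕ)) :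
    (1 / (Nat.factorial N : ℝ)) *
      ∫ l : Fin N → ℝ,
        (∏ q ∈ Finset.univ.filter (fun q : Fin N × Fin N => q.1 < q.2),
          (l q.2 - l q.1)^4) ∂(Measure.pi fun _ => ν) =
    pf (Matrix.of fun m n : Fin (2*N) =>
      ∫ x, ((p m).eval x * (Polynomial.derivative (p n)).eval x
            - (Polynomial.derivative (p m)).eval x * (p n).eval x) ∂ν) := by
  have hpoly : ∀ q : Polynomial ℝ, Integrable (fun x => q.eval x) ν := by
    intro q
    have h : (fun x => q.eval x) = fun x => ∑ k ∈ range (q.natDegree + 1), q.coeff k * x^k := by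
      funext x; rw [Polynomial.eval_eq_sum_range]
    rw [h]
    exact integrable_finset_sum _ fun k _ => (hmom k).const_mul _
  have hpm : ∀ m n : Fin (2*N), Integrable
      (fun x => (p m).eval x * (derivative (p n)).eval x) ν := by
    intro m n
    have h : (fun x => (p m).eval x * (derivative (p n)).eval x)
        = fun x => ((p m) * derivative (p n)).eval x := by
      funext x; rw [Polynomial.eval_mul]
    rw [h]; exact hpoly _
  set a : Matrix (Fin (2*N)) (Fin (2*N)) ℝ :=
    Matrix.of fun m n => ∫ x, (p m).eval x * (derivative (p n)).eval x ∂ν with ha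
  -- step 1: integrand = det Mm
  have hint : (fun l : Fin N → ℝ => ∏ q ∈ Finset.univ.filter
        (fun q : Fin N × Fin N => q.1 < q.2), (l q.2 - l q.1)^4)
      = fun l => (Mm N p l).det := by
    funext l
    rw [det_Mm N p hmonic hdeg l, Finset.prod_filter, Fintype.prod_prod_type]
    refine Finset.prod_congr rfl fun i _ => ?_
    rw [show Ioi i = univ.filter (i < ·) from by ext; simp, Finset.prod_filter]
  -- step 2: det expansion
  have hdet : (fun l : Fin N → ℝ => (Mm N p l).det)
      = fun l => ∑ σ : Equiv.Perm (Fin (2*N)), sgn σ * ∏ i : Fin N,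
          ((p (σ (fe N i 0))).eval (l i) * (derivative (p (σ (fe N i 1)))).eval (l i)) := by
    funext l
    rw [Matrix.det_apply]
    refine Finset.sum_congr rfl fun σ _ => ?_
    rw [prod_fe (fun c => Mm N p l (σ c) c),
      Finset.prod_congr rfl (fun i (_ : i ∈ univ) => show
        Mm N p l (σ (fe N i 0)) (fe N i 0) * Mm N p l (σ (fe N i 1)) (fe N i 1)
          = (p (σ (fe N i 0))).eval (l i) * (derivative (p (σ (fe N i 1)))).eval (l i) from by
        simp only [Mm, Matrix.of_apply, if_pos (fe0_mod i),
          if_neg (show ¬ ((fe N i 1 : Fin (2*N)) : ℕ) % 2 = 0 from by rw [fe1_mod]; omega), ci_fe])]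
    simp [Units.smul_def, sgn]
  -- step 3: integrate
  have hInt : ∫ l : Fin N → ℝ, (Mm N p l).det ∂(Measure.pi fun _ => ν)
      = ∑ σ : Equiv.Perm (Fin (2*N)), sgn σ *
          ∏ i : Fin N, a (σ (fe N i 0)) (σ (fe N i 1)) := by
    rw [hdet, integral_finset_sum _ (fun σ _ =>
      (integrable_pi_prod ν (fun i x => (p (σ (fe N i 0))).eval x *
        (derivative (p (σ (fe N i 1)))).eval x) (fun i => hpm _ _)).const_mul _)]
    refine Finset.sum_congr rfl fun σ _ => ?_
    rw [integral_const_mul, integral_pi_prod ν (fun i x => (p (σ (fe N i 0))).eval x *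
      (derivative (p (σ (fe N i 1)))).eval x)]
    rfl
  -- step 4: W = a - aᵀ
  have hW : ∀ m n : Fin (2*N), (Matrix.of fun m n : Fin (2*N) =>
      ∫ x, ((p m).eval x * (Polynomial.derivative (p n)).eval x
            - (Polynomial.derivative (p m)).eval x * (p n).eval x) ∂ν) m n
      = a m n - a n m := by
    intro m n
    have hpm' : Integrable (fun x => (derivative (p m)).eval x * (p n).eval x) ν := by
      have := hpm n m
      simpa [mul_comm] using this
    simp only [Matrix.of_apply, ha]
    rw [integral_sub (hpm m n) hpm']
    congr 1
    exact integral_congr_ae (Filter.Eventually.of_forall fun x => mul_comm _ _)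
  -- assemble
  rw [hint, hInt, pf_eq]
  have hsum : ∑ σ : Equiv.Perm (Fin (2*N)), sgn σ * ∏ m : Fin N,
      (Matrix.of fun m n : Fin (2*N) =>
        ∫ x, ((p m).eval x * (Polynomial.derivative (p n)).eval x
              - (Polynomial.derivative (p m)).eval x * (p n).eval x) ∂ν)
        (σ (fe N m 0)) (σ (fe N m 1))
      = 2^N * ∑ σ : Equiv.Perm (Fin (2*N)), sgn σ *
          ∏ i : Fin N, a (σ (fe N i 0)) (σ (fe N i 1)) := by
    rw [← sum_W a]
    refine Finset.sum_congr rfl fun σ _ => ?_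
    congr 1
    exact Finset.prod_congr rfl fun i _ => hW _ _
  rw [hsum]
  have h2 : (2:ℝ)^N ≠ 0 := by positivity
  have hf : ((Nat.factorial N : ℝ)) ≠ 0 := by
    exact_mod_cast Nat.factorial_ne_zero N
  field_simp
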